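/- Let Ω be a finite set with k := |Ω| > 1, let M ⊆ Δ^k be nonempty, and let N be a nonempty closed connected subset of the closed convex hull of M. Then for every n ∈ ℕ and all sets A_1, …, A_n ⊆ Ω, writing R := A_1 × ⋯ × A_n × Ω × Ω × ⋯ ⊆ Ω^ℕ for the corresponding rectangle, one has inf{IT(m)(R) : m ∈ M^ℕ_{→N}} = inf{IT(m)(R) : m ∈ M^ℕ} = inf{∏_{i=1}^n m_i(A_i) : m_1, …, m_n ∈ M}. -/

import Mathlib

open MeasureTheory Filter Topology

noncomputable section

/-- The set of probability vectors over a finite set `Ω`, i.e. the standard simplex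
inside the Euclidean space `ℝ^Ω`. -/
def probVec (Ω : Type*) [Fintype Ω] : Set (EuclideanSpace ℝ Ω) :=
  {p | (∀ x, 0 ≤ p x) ∧ ∑ x, p x = 1}

/-- The relative-frequency vector of the first `n` terms of `ω`. -/
def relFreq {Ω : Type*} [Fintype Ω] [DecidableEq Ω] (ω : ℕ → Ω) (n : ℕ) :
    EuclideanSpace ℝ Ω :=
  WithLp.toLp 2 (fun x => (((Finset.range n).filter fun i => ω i = x).card : ℝ) / n)

/-- The set of cluster points of a sequence in a topological space. -/
def clusterPts {X : Type*} [TopologicalSpace X] (a : ℕ → X) : Set X :=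
  {c | MapClusterPt c atTop a}

/-- Cesàro averages of a sequence of vectors. -/
def cesaro {Ω : Type*} [Fintype Ω] (m : ℕ → EuclideanSpace ℝ Ω) (n : ℕ) :
    EuclideanSpace ℝ Ω :=
  (n : ℝ)⁻¹ • ∑ i ∈ Finset.range n, m i

/-- `μ` is the infinite (Ionescu-Tulcea) independent product of the probability vectors `m i`,
characterized by its values on cylinder sets. -/
def IsIT {Ω : Type*} [Fintype Ω] [MeasurableSpace Ω] (m : ℕ → EuclideanSpace ℝ Ω)
    (μ : Measure (ℕ → Ω)) : Prop :=
  ∀ (n : ℕ) (x : Fin n → Ω),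
    μ {ω | ∀ i : Fin n, ω (i : ℕ) = x i} = ∏ i : Fin n, ENNReal.ofReal (m i.val (x i))

end

section Aux

variable {Ω : Type*} [Fintype Ω]

local notation "E" => EuclideanSpace ℝ Ω

lemma probVec_norm_le {p : E} (hp : p ∈ probVec Ω) : ‖p‖ ≤ 1 := by
  obtain ⟨h0, h1⟩ := hp
  rw [EuclideanSpace.norm_eq]
  have : ∑ x, ‖p x‖ ^ 2 ≤ 1 := by
    calc ∑ x, ‖p x‖ ^ 2 ≤ ∑ x, p x := by
          apply Finset.sum_le_sum
          intro x _
          rw [Real.norm_eq_abs, abs_of_nonneg (h0 x)]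
          have hle1 : p x ≤ 1 := by
            have := Finset.single_le_sum (f := fun x => p x) (fun x _ => h0 x) (Finset.mem_univ x)
            linarith [h1 ▸ this]
          nlinarith [h0 x]
      _ = 1 := h1
  calc Real.sqrt (∑ x, ‖p x‖ ^ 2) ≤ Real.sqrt 1 := Real.sqrt_le_sqrt this
    _ = 1 := Real.sqrt_one

lemma probVec_convex : Convex ℝ (probVec Ω) := by
  intro p hp q hq a b ha hb hab
  constructor
  · intro x
    have : (a • p + b • q) x = a * p x + b * q x := rfl
    rw [this]
    have := hp.1 x; have := hq.1 x
    positivity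
  · have : ∀ x, (a • p + b • q) x = a * p x + b * q x := fun x => rfl
    simp_rw [this, Finset.sum_add_distrib, ← Finset.mul_sum, hp.2, hq.2]
    simpa using hab

lemma probVec_isClosed : IsClosed (probVec Ω) := by
  have h1 : IsClosed {p : E | ∀ x, 0 ≤ p x} := by
    have : {p : E | ∀ x, 0 ≤ p x} = ⋂ x, {p : E | 0 ≤ p x} := by ext p; simp
    rw [this]
    exact isClosed_iInter fun x =>
      isClosed_le continuous_const (EuclideanSpace.proj (𝕜 := ℝ) x).continuous
  have h2 : IsClosed {p : E | ∑ x, p x = 1} := by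
    have hc : Continuous fun p : E => ∑ x, p x :=
      continuous_finset_sum _ fun x _ => (EuclideanSpace.proj (𝕜 := ℝ) x).continuous
    exact isClosed_eq hc continuous_const
  exact (h1.inter h2)

lemma norm_sub_le_two {p q : E} (hp : p ∈ probVec Ω) (hq : q ∈ probVec Ω) : ‖p - q‖ ≤ 2 := by
  calc ‖p - q‖ ≤ ‖p‖ + ‖q‖ := norm_sub_le _ _
    _ ≤ 2 := by linarith [probVec_norm_le hp, probVec_norm_le hq]

lemma greedy_choice {M : Set E} {τ : E} (h : τ ∈ convexHull ℝ M) (v : E) :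
    ∃ p ∈ M, inner (𝕜 := ℝ) (p - τ) v ≤ 0 := by
  set C : Set E := {x : E | ∃ p ∈ M, inner (𝕜 := ℝ) p v ≤ inner (𝕜 := ℝ) x v} with hC
  have hMC : M ⊆ C := fun p hp => ⟨p, hp, le_refl _⟩
  have hconv : Convex ℝ C := by
    rintro x ⟨px, hpx, hx⟩ y ⟨py, hpy, hy⟩ a b ha hb hab
    rcases le_total (inner (𝕜 := ℝ) px v : ℝ) (inner (𝕜 := ℝ) py v) with hle | hle
    · refine ⟨px, hpx, ?_⟩
      have : inner (𝕜 := ℝ) (a • x + b • y) v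
          = a * inner (𝕜 := ℝ) x v + b * inner (𝕜 := ℝ) y v := by
        rw [inner_add_left, real_inner_smul_left, real_inner_smul_left]
      rw [this]
      have h1 : a * inner (𝕜 := ℝ) px v ≤ a * inner (𝕜 := ℝ) x v :=
        mul_le_mul_of_nonneg_left hx ha
      have h2 : b * inner (𝕜 := ℝ) px v ≤ b * inner (𝕜 := ℝ) y v :=
        mul_le_mul_of_nonneg_left (le_trans hle hy) hb
      have h3 : a * inner (𝕜 := ℝ) px v + b * inner (𝕜 := ℝ) px v = inner (𝕜 := ℝ) px v := by
        rw [← add_mul, hab, one_mul]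
      linarith
    · refine ⟨py, hpy, ?_⟩
      have : inner (𝕜 := ℝ) (a • x + b • y) v
          = a * inner (𝕜 := ℝ) x v + b * inner (𝕜 := ℝ) y v := by
        rw [inner_add_left, real_inner_smul_left, real_inner_smul_left]
      rw [this]
      have h1 : b * inner (𝕜 := ℝ) py v ≤ b * inner (𝕜 := ℝ) y v :=
        mul_le_mul_of_nonneg_left hy hb
      have h2 : a * inner (𝕜 := ℝ) py v ≤ a * inner (𝕜 := ℝ) x v :=
        mul_le_mul_of_nonneg_left (le_trans hle hx) ha
      have h3 : a * inner (𝕜 := ℝ) py v + b * inner (𝕜 := ℝ) py v = inner (𝕜 := ℝ) py v := by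
        rw [← add_mul, hab, one_mul]
      linarith
  obtain ⟨p, hp, hle⟩ := convexHull_min hMC hconv h
  exact ⟨p, hp, by rw [inner_sub_left]; linarith⟩

/-- Generic dependent-choice recursion. -/
lemma depRec {α : Type*} (P : ℕ → α → Prop) (R : ℕ → α → α → Prop)
    (h0 : ∃ a, P 0 a) (hstep : ∀ n a, P n a → ∃ b, P (n + 1) b ∧ R n a b) :
    ∃ f : ℕ → α, (∀ n, P n (f n)) ∧ ∀ n, R n (f n) (f (n + 1)) := by
  let g : (n : ℕ) → {a // P n a} := fun n =>
    Nat.rec ⟨h0.choose, h0.choose_spec⟩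
      (fun n ih => ⟨(hstep n ih.1 ih.2).choose, (hstep n ih.1 ih.2).choose_spec.1⟩) n
  refine ⟨fun n => (g n).1, fun n => (g n).2, fun n => ?_⟩
  exact (hstep n (g n).1 (g n).2).choose_spec.2

end Aux


section Chains

variable {X : Type*} [MetricSpace X] {s : Set X}

lemma chain_append {ε : ℝ} {L1 L2 : ℕ} {f g : ℕ → X} (hfg : g 0 = f L1)
    (hf1 : ∀ i ≤ L1, f i ∈ s) (hf2 : ∀ i < L1, dist (f i) (f (i + 1)) ≤ ε)
    (hg1 : ∀ i ≤ L2, g i ∈ s) (hg2 : ∀ i < L2, dist (g i) (g (i + 1)) ≤ ε) :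
    ∃ h : ℕ → X, h 0 = f 0 ∧ (∀ i ≤ L1 + L2, h i ∈ s) ∧
      (∀ i < L1 + L2, dist (h i) (h (i + 1)) ≤ ε) ∧
      (∀ i ≤ L1, h i = f i) ∧ (∀ j ≤ L2, h (L1 + j) = g j) := by
  refine ⟨fun i => if i ≤ L1 then f i else g (i - L1), ?_, ?_, ?_, ?_, ?_⟩
  · simp
  · intro i hi
    by_cases h : i ≤ L1
    · simpa [h] using hf1 i h
    · have h2 : i - L1 ≤ L2 := by omega
      simpa [h] using hg1 _ h2
  · intro i hi
    by_cases h : i < L1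
    · have h1 : i ≤ L1 := by omega
      have h2 : i + 1 ≤ L1 := by omega
      simpa [h1, h2] using hf2 i h
    · by_cases h' : i = L1
      · have h1 : i ≤ L1 := le_of_eq h'
        have h2 : ¬ (i + 1 ≤ L1) := by omega
        have h5 : i + 1 - L1 = 1 := by omega
        have h6 := hg2 0 (show 0 < L2 by omega)
        rw [hfg] at h6
        simpa [h1, h2, h5, h'] using h6
      · have h1 : ¬ (i ≤ L1) := by omega
        have h2 : ¬ (i + 1 ≤ L1) := by omega
        have h3 : i - L1 < L2 := by omega
        have h4 : i + 1 - L1 = (i - L1) + 1 := by omega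
        simp only [h1, if_neg, h2, h4]
        exact hg2 _ h3
  · intro i hi; simp [hi]
  · intro j hj
    by_cases h : j = 0
    · subst h; simp [hfg]
    · have h1 : ¬ (L1 + j ≤ L1) := by omega
      simp [h1]

lemma exists_chain (hconn : IsPreconnected s) {a b : X} (ha : a ∈ s) (hb : b ∈ s)
    {ε : ℝ} (hε : 0 < ε) :
    ∃ (L : ℕ) (f : ℕ → X), f 0 = a ∧ f L = b ∧ (∀ i ≤ L, f i ∈ s) ∧
      ∀ i < L, dist (f i) (f (i + 1)) ≤ ε := by
  set S : Set X := {c | c ∈ s ∧ ∃ (L : ℕ) (f : ℕ → X), f 0 = a ∧ f L = c ∧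
    (∀ i ≤ L, f i ∈ s) ∧ ∀ i < L, dist (f i) (f (i + 1)) ≤ ε} with hS
  have hext : ∀ c ∈ S, ∀ x ∈ s, dist c x ≤ ε → x ∈ S := by
    rintro c ⟨hcs, L, f, hf0, hfL, hfs, hfd⟩ x hx hd
    refine ⟨hx, L + 1, fun i => if i ≤ L then f i else x, by simp [hf0], by simp, ?_, ?_⟩
    · intro i hi
      by_cases h : i ≤ L
      · simpa [h] using hfs i h
      · simpa [h] using hx
    · intro i hi
      by_cases h : i < L
      · have h1 : i ≤ L := by omega
        have h2 : i + 1 ≤ L := by omega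
        simpa [h1, h2] using hfd i h
      · have h1 : i = L := by omega
        subst h1
        have h2 : ¬ (i + 1 ≤ i) := by omega
        simpa [h2, hfL] using hd
  have haS : a ∈ S := ⟨ha, 0, fun _ => a, rfl, rfl, by intro i hi; simpa using ha, by omega⟩
  by_contra hcon
  have hbS : b ∉ S := by
    intro hbS
    obtain ⟨-, L, f, h0, hL, hs', hd⟩ := hbS
    exact hcon ⟨L, f, h0, hL, hs', hd⟩
  set U : Set X := ⋃ c ∈ S, Metric.ball c ε with hU
  set V : Set X := ⋃ c ∈ s \ S, Metric.ball c ε with hV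
  have hUopen : IsOpen U := isOpen_biUnion fun _ _ => Metric.isOpen_ball
  have hVopen : IsOpen V := isOpen_biUnion fun _ _ => Metric.isOpen_ball
  have hsub : s ⊆ U ∪ V := by
    intro x hx
    by_cases h : x ∈ S
    · exact Or.inl (Set.mem_biUnion h (Metric.mem_ball_self hε))
    · exact Or.inr (Set.mem_biUnion ⟨hx, h⟩ (Metric.mem_ball_self hε))
  have hUS : s ∩ U ⊆ S := by
    rintro x ⟨hxs, hxU⟩
    obtain ⟨c, hc, hxc⟩ := Set.mem_iUnion₂.mp hxU
    exact hext c hc x hxs (by rw [dist_comm]; exact le_of_lt hxc)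
  have hVS : ∀ x ∈ s ∩ V, x ∉ S := by
    rintro x ⟨hxs, hxV⟩ hxS
    obtain ⟨c, hc, hxc⟩ := Set.mem_iUnion₂.mp hxV
    exact hc.2 (hext x hxS c hc.1 (le_of_lt hxc))
  obtain ⟨x, hxs, hxU, hxV⟩ := hconn U V hUopen hVopen hsub
    ⟨a, ha, Set.mem_biUnion haS (Metric.mem_ball_self hε)⟩
    ⟨b, hb, Set.mem_biUnion ⟨hb, hbS⟩ (Metric.mem_ball_self hε)⟩
  exact hVS x ⟨hxs, hxV⟩ (hUS ⟨hxs, hxU⟩)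

lemma exists_block (hconn : IsPreconnected s) (htb : TotallyBounded s) {a : X} (ha : a ∈ s)
    {ε : ℝ} (hε : 0 < ε) :
    ∃ (L : ℕ) (f : ℕ → X), f 0 = a ∧ (∀ i ≤ L, f i ∈ s) ∧
      (∀ i < L, dist (f i) (f (i + 1)) ≤ ε) ∧ ∀ y ∈ s, ∃ i ≤ L, dist (f i) y ≤ ε := by
  classical
  obtain ⟨t, hts, htfin, hcov⟩ := totallyBounded_iff_subset.mp htb _ (Metric.dist_mem_uniformity hε)
  -- chain through the finite net `t`
  have key : ∀ u : Finset X, ↑u ⊆ s → ∃ (L : ℕ) (f : ℕ → X), f 0 = a ∧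
      (∀ i ≤ L, f i ∈ s) ∧ (∀ i < L, dist (f i) (f (i + 1)) ≤ ε) ∧
      ∀ y ∈ u, ∃ i ≤ L, f i = y := by
    intro u
    induction u using Finset.induction_on with
    | empty =>
      intro _
      exact ⟨0, fun _ => a, rfl, fun i hi => by simpa using ha, by omega, by simp⟩
    | @insert x u hxu ih =>
      intro hins
      have hus : ↑u ⊆ s := by
        intro y hy; exact hins (by simpa using Or.inr hy)
      have hxs : x ∈ s := hins (by simp)
      obtain ⟨L, f, hf0, hfs, hfd, hfvis⟩ := ih hus
      obtain ⟨L2, g, hg0, hgL, hgs, hgd⟩ := exists_chain hconn (hfs L le_rfl) hxs hε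
      obtain ⟨h, hh0, hhs, hhd, hhf, hhg⟩ := chain_append hg0 hfs hfd hgs hgd
      refine ⟨L + L2, h, by rw [hh0, hf0], hhs, hhd, ?_⟩
      intro y hy
      rcases Finset.mem_insert.mp hy with rfl | hy
      · exact ⟨L + L2, le_rfl, by rw [hhg L2 le_rfl, hgL]⟩
      · obtain ⟨i, hi, hfi⟩ := hfvis y hy
        exact ⟨i, by omega, by rw [hhf i hi, hfi]⟩
  obtain ⟨L, f, hf0, hfs, hfd, hvis⟩ := key htfin.toFinset (by simpa using hts)
  refine ⟨L, f, hf0, hfs, hfd, ?_⟩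
  intro y hy
  obtain ⟨z, hz, hyz⟩ := Set.mem_iUnion₂.mp (hcov hy)
  obtain ⟨i, hi, hfi⟩ := hvis z (htfin.mem_toFinset.mpr hz)
  exact ⟨i, hi, by rw [hfi, dist_comm]; exact le_of_lt hyz⟩

end Chains

section Targets

variable {X : Type*} [MetricSpace X] {s : Set X}

/-- A sequence of "targets" in `s`: consecutive distances tend to zero, and every point of `s`
is approached arbitrarily closely, arbitrarily late. -/
lemma exists_targets (hne : s.Nonempty) (hconn : IsPreconnected s) (htb : TotallyBounded s) :
    ∃ t : ℕ → X, (∀ j, t j ∈ s) ∧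
      (∀ ε > 0, ∃ J, ∀ j ≥ J, dist (t j) (t (j + 1)) ≤ ε) ∧
      (∀ y ∈ s, ∀ ε > 0, ∀ J : ℕ, ∃ j ≥ J, dist (t j) y ≤ ε) := by
  classical
  set P : ℕ → ℕ × (ℕ → X) → Prop := fun k b =>
    (∀ i ≤ b.1, b.2 i ∈ s) ∧ (∀ i < b.1, dist (b.2 i) (b.2 (i + 1)) ≤ 1 / (k + 1)) ∧
      (∀ y ∈ s, ∃ i ≤ b.1, dist (b.2 i) y ≤ 1 / (k + 1)) with hP
  set R : ℕ → ℕ × (ℕ → X) → ℕ × (ℕ → X) → Prop := fun _ b c => c.2 0 = b.2 b.1 with hR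
  have hpos : ∀ k : ℕ, (0 : ℝ) < 1 / (k + 1) := fun k => by positivity
  have h0 : ∃ b, P 0 b := by
    obtain ⟨L, f, _, h1, h2, h3⟩ := exists_block hconn htb hne.choose_spec (hpos 0)
    exact ⟨(L, f), h1, h2, h3⟩
  have hstep : ∀ k b, P k b → ∃ c, P (k + 1) c ∧ R k b c := by
    intro k b hb
    obtain ⟨L, f, hf0, h1, h2, h3⟩ := exists_block hconn htb (hb.1 b.1 le_rfl) (hpos (k + 1))
    exact ⟨(L, f), ⟨h1, by push_cast at h2 ⊢; exact h2, by push_cast at h3 ⊢; exact h3⟩, hf0⟩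
  obtain ⟨g, hg, hgR⟩ := depRec P R h0 hstep
  set len : ℕ → ℕ := fun k => ∑ i ∈ Finset.range k, ((g i).1 + 1) with hlen
  have hlen_succ : ∀ k, len (k + 1) = len k + ((g k).1 + 1) := by
    intro k; rw [hlen]; exact Finset.sum_range_succ _ k
  have hlen_mono : ∀ k, len k < len (k + 1) := by
    intro k; have := hlen_succ k; omega
  have hk_le_len : ∀ k, k ≤ len k := by
    intro k; induction k with
    | zero => simp [hlen]
    | succ k ih => have := hlen_mono k; omega
  have hlen_le : ∀ {k k'}, k ≤ k' → len k ≤ len k' := by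
    intro k k' h
    exact Finset.sum_le_sum_of_subset (Finset.range_subset_range.mpr h)
  set stage : ℕ → ℕ := fun j => Nat.findGreatest (fun k => len k ≤ j) j with hstage
  have hstage_le : ∀ j, len (stage j) ≤ j := by
    intro j
    have hl0 : len 0 = 0 := by rw [hlen]; simp
    exact Nat.findGreatest_spec (P := fun k => len k ≤ j) (Nat.zero_le j)
      (show len 0 ≤ j by omega)
  have hstage_lt : ∀ j, j < len (stage j + 1) := by
    intro j
    by_contra h
    push_neg at h
    exact Nat.findGreatest_is_greatest (lt_add_one _)
      (le_trans (hk_le_len _) h) h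
  have hstage_eq : ∀ {k j}, len k ≤ j → j < len (k + 1) → stage j = k := by
    intro k j h1 h2
    have hge : k ≤ stage j := Nat.le_findGreatest (le_trans (hk_le_len k) h1) h1
    have hle : stage j ≤ k := by
      by_contra h
      push_neg at h
      have : len (k + 1) ≤ len (stage j) := hlen_le h
      have := hstage_le j
      omega
    omega
  have hstage_ge : ∀ K j, len K ≤ j → K ≤ stage j :=
    fun K j h => Nat.le_findGreatest (le_trans (hk_le_len K) h) h
  set t : ℕ → X := fun j => (g (stage j)).2 (j - len (stage j)) with ht
  have hoff : ∀ j, j - len (stage j) ≤ (g (stage j)).1 := by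
    intro j
    have h1 := hstage_le j
    have h2 := hstage_lt j
    have h3 := hlen_succ (stage j)
    omega
  have htmem : ∀ j, t j ∈ s := fun j => (hg (stage j)).1 _ (hoff j)
  refine ⟨t, htmem, ?_, ?_⟩
  · -- steps tend to 0
    intro ε hε
    obtain ⟨K, hK⟩ := exists_nat_gt (1 / ε)
    refine ⟨len K, fun j hj => ?_⟩
    have hKs : K ≤ stage j := hstage_ge K j hj
    have hstep_small : (1 : ℝ) / (stage j + 1) ≤ ε := by
      rw [div_le_iff₀ (by positivity)]
      rw [div_lt_iff₀ hε] at hK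
      have : (K : ℝ) ≤ stage j := by exact_mod_cast hKs
      nlinarith
    by_cases hcase : j + 1 < len (stage j + 1)
    · have hst : stage (j + 1) = stage j :=
        hstage_eq (le_trans (hstage_le j) (Nat.le_succ j)) hcase
      have hlt : j - len (stage j) < (g (stage j)).1 := by
        have := hstage_le j
        have := hlen_succ (stage j)
        omega
      have harith : j + 1 - len (stage j) = (j - len (stage j)) + 1 := by
        have := hstage_le j; omega
      have := (hg (stage j)).2.1 _ hlt
      calc dist (t j) (t (j + 1)) = dist ((g (stage j)).2 (j - len (stage j)))
            ((g (stage j)).2 ((j - len (stage j)) + 1)) := by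
              rw [ht]; simp only [hst, harith]
        _ ≤ 1 / (stage j + 1) := this
        _ ≤ ε := hstep_small
    · -- junction: j + 1 = len (stage j + 1)
      have hj1 : j + 1 = len (stage j + 1) := by
        have := hstage_lt j; omega
      have hst : stage (j + 1) = stage j + 1 := by
        apply hstage_eq (le_of_eq hj1.symm)
        rw [hlen_succ (stage j + 1)]
        have := hlen_succ (stage j); omega
      have hoffj : j - len (stage j) = (g (stage j)).1 := by
        have := hstage_le j
        have := hlen_succ (stage j)
        omega
      have h7 : (j + 1) - len (stage j + 1) = 0 := by omega
      have : t (j + 1) = t j := by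
        calc t (j + 1) = (g (stage (j + 1))).2 ((j + 1) - len (stage (j + 1))) := rfl
          _ = (g (stage j + 1)).2 ((j + 1) - len (stage j + 1)) := by rw [hst]
          _ = (g (stage j + 1)).2 0 := by rw [h7]
          _ = (g (stage j)).2 ((g (stage j)).1) := hgR (stage j)
          _ = t j := by show _ = (g (stage j)).2 (j - len (stage j)); rw [hoffj]
      rw [this, dist_self]
      linarith
  · -- density
    intro y hy ε hε J
    obtain ⟨K0, hK0⟩ := exists_nat_gt (1 / ε)
    set k := max K0 J with hk
    obtain ⟨i, hi, hd⟩ := (hg k).2.2 y hy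
    have hstj : stage (len k + i) = k := by
      apply hstage_eq (by omega)
      have := hlen_succ k
      omega
    have htj : t (len k + i) = (g k).2 i := by
      show (g (stage (len k + i))).2 (len k + i - len (stage (len k + i))) = (g k).2 i
      rw [hstj]
      have h8 : len k + i - len k = i := by omega
      rw [h8]
    refine ⟨len k + i, ?_, ?_⟩
    · have := hk_le_len k; omega
    · rw [htj]
      refine le_trans hd ?_
      rw [div_le_iff₀ (by positivity)]
      rw [div_lt_iff₀ hε] at hK0
      have h1 : (K0 : ℝ) ≤ k := by exact_mod_cast le_max_left K0 J
      nlinarith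

end Targets

noncomputable section

def cesaro' {Ω : Type*} [Fintype Ω] (m : ℕ → EuclideanSpace ℝ Ω) (n : ℕ) :
    EuclideanSpace ℝ Ω :=
  (n : ℝ)⁻¹ • ∑ i ∈ Finset.range n, m i

end

section Stage

variable {Ω : Type*} [Fintype Ω]

local notation "E" => EuclideanSpace ℝ Ω

lemma sqrt_frac_le {n j : ℕ} (hn : 1 ≤ n) :
    2 * Real.sqrt j / (n + j) ≤ 2 / Real.sqrt (n + j) := by
  have hn' : (1 : ℝ) ≤ (n : ℝ) := by exact_mod_cast hn
  have hj' : (0 : ℝ) ≤ (j : ℝ) := Nat.cast_nonneg j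
  have hnj : (0 : ℝ) < n + j := by linarith
  have hb : (0 : ℝ) < Real.sqrt (n + j) := Real.sqrt_pos.mpr hnj
  rw [div_le_div_iff₀ hnj hb]
  have h1 : Real.sqrt j ≤ Real.sqrt (n + j) := Real.sqrt_le_sqrt (by linarith)
  have h2 : Real.sqrt (n + j) * Real.sqrt (n + j) = (n : ℝ) + j :=
    Real.mul_self_sqrt (le_of_lt hnj)
  nlinarith [Real.sqrt_nonneg (j : ℝ), Real.sqrt_nonneg ((n : ℝ) + j)]

set_option maxHeartbeats 2000000 in
lemma stage_lemma {M : Set E} (hMsub : M ⊆ probVec Ω) {τ : E}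
    (hτ : τ ∈ closure (convexHull ℝ M)) (m : ℕ → E) (hm : ∀ i, m i ∈ M)
    {n : ℕ} (hn : 1 ≤ n) {δ : ℝ} (hδ : 0 < δ) (Nmin : ℕ) :
    ∃ (m' : ℕ → E) (n' : ℕ), (∀ i, m' i ∈ M) ∧ (∀ i < n, m' i = m i) ∧
      n < n' ∧ Nmin ≤ n' ∧ dist (cesaro' m' n') τ ≤ δ ∧
      ∀ i, n ≤ i → i ≤ n' →
        dist (cesaro' m' i) τ ≤ dist (cesaro' m n) τ + δ + 2 / Real.sqrt n := by
  classical
  obtain ⟨τ', hτ'M, hττ'⟩ : ∃ τ' ∈ convexHull ℝ M, dist τ' τ ≤ δ / 4 := by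
    obtain ⟨b, hb, hd⟩ := Metric.mem_closure_iff.mp hτ (δ / 4) (by positivity)
    exact ⟨b, hb, by rw [dist_comm]; linarith⟩
  have hτ'pv : τ' ∈ probVec Ω := convexHull_min hMsub probVec_convex hτ'M
  have hch := fun v => greedy_choice hτ'M v
  choose pick hpickM hpickle using hch
  set S : ℕ → E := fun j => Nat.rec (∑ i ∈ Finset.range n, m i)
    (fun j Sj => Sj + pick ((((n + j : ℕ) : ℝ))⁻¹ • Sj - τ')) j with hS
  have hSsucc : ∀ j, S (j + 1) = S j + pick ((((n + j : ℕ) : ℝ))⁻¹ • S j - τ') := fun j => rfl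
  set m' : ℕ → E := fun i => if i < n then m i
    else pick ((((i : ℕ) : ℝ))⁻¹ • S (i - n) - τ') with hm'
  have hm'eq : ∀ i < n, m' i = m i := by intro i hi; simp only [hm', if_pos hi]
  have hm'M : ∀ i, m' i ∈ M := by
    intro i
    by_cases h : i < n
    · rw [hm'eq i h]; exact hm i
    · simp only [hm', if_neg h]; exact hpickM _
  have hSsum : ∀ j, S j = ∑ i ∈ Finset.range (n + j), m' i := by
    intro j
    induction j with
    | zero =>
      simp only [Nat.add_zero]
      show ∑ i ∈ Finset.range n, m i = _
      exact Finset.sum_congr rfl fun i hi => (hm'eq i (Finset.mem_range.mp hi)).symm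
    | succ j ih =>
      have h1 : ¬ (n + j < n) := by omega
      have h2 : n + j - n = j := by omega
      have h3 : m' (n + j) = pick ((((n + j : ℕ) : ℝ))⁻¹ • S j - τ') := by
        simp only [hm', if_neg h1, h2]
      rw [hSsucc, ← Nat.add_assoc, Finset.sum_range_succ, ← ih, h3]
  have hces : ∀ j, cesaro' m' (n + j) = (((n + j : ℕ) : ℝ))⁻¹ • S j := by
    intro j; rw [cesaro', hSsum]
  set d : ℕ → ℝ := fun j => ‖S j - (((n + j : ℕ) : ℝ)) • τ'‖ with hd
  have hnj0 : ∀ j : ℕ, (0 : ℝ) < ((n + j : ℕ) : ℝ) := by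
    intro j; push_cast; have : (1 : ℝ) ≤ n := by exact_mod_cast hn
    positivity
  have hstep4 : ∀ j, d (j + 1) ^ 2 ≤ d j ^ 2 + 4 := by
    intro j
    set p := pick ((((n + j : ℕ) : ℝ))⁻¹ • S j - τ') with hp
    set a : E := S j - (((n + j : ℕ) : ℝ)) • τ' with ha
    set b : E := p - τ' with hb
    have hab : S (j + 1) - (((n + (j + 1) : ℕ) : ℝ)) • τ' = a + b := by
      rw [hSsucc, ha, hb]
      have : (((n + (j + 1) : ℕ) : ℝ)) = ((n + j : ℕ) : ℝ) + 1 := by push_cast; ring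
      rw [this, add_smul, one_smul]
      abel
    have hinner : inner (𝕜 := ℝ) a b ≤ 0 := by
      have hv : a = (((n + j : ℕ) : ℝ)) • ((((n + j : ℕ) : ℝ))⁻¹ • S j - τ') := by
        rw [smul_sub, smul_inv_smul₀ (ne_of_gt (hnj0 j))]
      rw [hv, real_inner_smul_left]
      have := hpickle ((((n + j : ℕ) : ℝ))⁻¹ • S j - τ')
      rw [real_inner_comm] at this
      exact mul_nonpos_of_nonneg_of_nonpos (le_of_lt (hnj0 j)) this
    have hbnorm : ‖b‖ ≤ 2 := norm_sub_le_two (hMsub (hpickM _)) hτ'pv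
    have : d (j + 1) ^ 2 = ‖a + b‖ ^ 2 := by rw [hd]; simp only; rw [hab]
    rw [this, norm_add_sq_real]
    have hbsq : ‖b‖ ^ 2 ≤ 4 := by nlinarith [norm_nonneg b]
    have : ‖a‖ = d j := rfl
    nlinarith [hinner]
  have hdsq : ∀ j, d j ^ 2 ≤ d 0 ^ 2 + 4 * j := by
    intro j
    induction j with
    | zero => simp
    | succ j ih =>
      have := hstep4 j
      push_cast
      push_cast at ih
      nlinarith
  have hd0nn : (0 : ℝ) ≤ d 0 := norm_nonneg _
  have hdle : ∀ j, d j ≤ d 0 + 2 * Real.sqrt j := by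
    intro j
    have h0 : (0 : ℝ) ≤ d j := norm_nonneg _
    have h1 : d j ^ 2 ≤ (d 0 + 2 * Real.sqrt j) ^ 2 := by
      have hsq : Real.sqrt j ^ 2 = (j : ℝ) := Real.sq_sqrt (Nat.cast_nonneg j)
      nlinarith [hdsq j, Real.sqrt_nonneg (j : ℝ), hd0nn]
    calc d j = Real.sqrt (d j ^ 2) := (Real.sqrt_sq h0).symm
      _ ≤ Real.sqrt ((d 0 + 2 * Real.sqrt j) ^ 2) := Real.sqrt_le_sqrt h1
      _ = d 0 + 2 * Real.sqrt j := Real.sqrt_sq (by positivity)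
  have hdist : ∀ j, dist (cesaro' m' (n + j)) τ' = d j / ((n + j : ℕ) : ℝ) := by
    intro j
    rw [hces j, dist_eq_norm]
    have heq : (((n + j : ℕ) : ℝ))⁻¹ • S j - τ'
        = (((n + j : ℕ) : ℝ))⁻¹ • (S j - (((n + j : ℕ) : ℝ)) • τ') := by
      rw [smul_sub, inv_smul_smul₀ (ne_of_gt (hnj0 j))]
    rw [heq, norm_smul, Real.norm_eq_abs, abs_of_pos (inv_pos.mpr (hnj0 j)), inv_mul_eq_div]
  have hces_n : cesaro' m' n = cesaro' m n := by
    rw [cesaro', cesaro']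
    congr 1
    exact Finset.sum_congr rfl fun i hi => hm'eq i (Finset.mem_range.mp hi)
  have hd0 : d 0 = (n : ℝ) * dist (cesaro' m n) τ' := by
    have h := hdist 0
    rw [Nat.add_zero] at h
    rw [hces_n] at h
    rw [h]
    field_simp
  set D0 : ℝ := dist (cesaro' m n) τ' with hD0
  have hD0nn : 0 ≤ D0 := dist_nonneg
  -- general bound for all j
  have hgen : ∀ j, dist (cesaro' m' (n + j)) τ'
      ≤ D0 * (n : ℝ) / ((n + j : ℕ) : ℝ) + 2 / Real.sqrt ((n + j : ℕ) : ℝ) := by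
    intro j
    rw [hdist j]
    have h1 : d j / ((n + j : ℕ) : ℝ) ≤ (d 0 + 2 * Real.sqrt j) / ((n + j : ℕ) : ℝ) :=
      (div_le_div_iff_of_pos_right (hnj0 j)).mpr (hdle j)
    have h2 : (d 0 + 2 * Real.sqrt j) / ((n + j : ℕ) : ℝ)
        = D0 * (n : ℝ) / ((n + j : ℕ) : ℝ) + 2 * Real.sqrt j / ((n + j : ℕ) : ℝ) := by
      rw [hd0]; ring
    have h3 : 2 * Real.sqrt j / ((n + j : ℕ) : ℝ) ≤ 2 / Real.sqrt ((n + j : ℕ) : ℝ) := by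
      have := sqrt_frac_le (n := n) (j := j) hn
      push_cast at this ⊢
      exact this
    linarith
  clear_value S d m'
  clear hS hd hm'
  -- choose the final index
  set C : ℝ := D0 * (n : ℝ) with hC
  have hCnn : 0 ≤ C := by positivity
  set j0 : ℕ := Nmin + n + 1 + ⌈4 * C / δ⌉₊ + ⌈16 / δ ^ 2⌉₊ with hj0
  have hj0big1 : 4 * C / δ ≤ ((n + j0 : ℕ) : ℝ) := by
    calc 4 * C / δ ≤ (⌈4 * C / δ⌉₊ : ℝ) := Nat.le_ceil _
      _ ≤ ((n + j0 : ℕ) : ℝ) := by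
          have : ⌈4 * C / δ⌉₊ ≤ n + j0 := by omega
          exact_mod_cast this
  have hj0big2 : 16 / δ ^ 2 ≤ ((n + j0 : ℕ) : ℝ) := by
    calc 16 / δ ^ 2 ≤ (⌈16 / δ ^ 2⌉₊ : ℝ) := Nat.le_ceil _
      _ ≤ ((n + j0 : ℕ) : ℝ) := by
          have : ⌈16 / δ ^ 2⌉₊ ≤ n + j0 := by omega
          exact_mod_cast this
  have hterm1 : C / ((n + j0 : ℕ) : ℝ) ≤ δ / 4 := by
    rw [div_le_div_iff₀ (hnj0 j0) (by norm_num : (0:ℝ) < 4)]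
    rw [div_le_iff₀ hδ] at hj0big1
    nlinarith
  have hterm2 : 2 / Real.sqrt ((n + j0 : ℕ) : ℝ) ≤ δ / 2 := by
    have hs : 4 / δ ≤ Real.sqrt ((n + j0 : ℕ) : ℝ) := by
      have h16 : Real.sqrt (16 / δ ^ 2) = 4 / δ := by
        have he : 16 / δ ^ 2 = (4 / δ) ^ 2 := by field_simp; ring
        rw [he, Real.sqrt_sq (by positivity)]
      calc 4 / δ = Real.sqrt (16 / δ ^ 2) := h16.symm
        _ ≤ Real.sqrt ((n + j0 : ℕ) : ℝ) := Real.sqrt_le_sqrt hj0big2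
    have hspos : 0 < Real.sqrt ((n + j0 : ℕ) : ℝ) := Real.sqrt_pos.mpr (hnj0 j0)
    rw [div_le_div_iff₀ hspos (by norm_num : (0:ℝ) < 2)]
    have hkey : δ * (4 / δ) = 4 := by field_simp
    nlinarith [mul_le_mul_of_nonneg_left hs (le_of_lt hδ)]
  refine ⟨m', n + j0, hm'M, hm'eq, by omega, by omega, ?_, ?_⟩
  · -- final distance
    calc dist (cesaro' m' (n + j0)) τ ≤ dist (cesaro' m' (n + j0)) τ' + dist τ' τ :=
          dist_triangle _ _ _
      _ ≤ (C / ((n + j0 : ℕ) : ℝ) + 2 / Real.sqrt ((n + j0 : ℕ) : ℝ)) + δ / 4 := by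
          have := hgen j0
          rw [hC]
          exact add_le_add this hττ'
      _ ≤ (δ / 4 + δ / 2) + δ / 4 := by
          exact add_le_add (add_le_add hterm1 hterm2) (le_refl _)
      _ = δ := by ring
  · -- en-route bound
    intro i hni hin'
    have hieq : i = n + (i - n) := by omega
    set j := i - n with hjdef
    have hb1 : dist (cesaro' m' i) τ' ≤ C / ((n + j : ℕ) : ℝ) + 2 / Real.sqrt ((n + j : ℕ) : ℝ) := by
      rw [hieq]
      exact hgen j
    have hb2 : C / ((n + j : ℕ) : ℝ) ≤ D0 := by
      have hnn : (0 : ℝ) < (n : ℝ) := by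
        have : (1 : ℝ) ≤ (n : ℝ) := by exact_mod_cast hn
        linarith
      rw [hC, div_le_iff₀ (hnj0 j)]
      have hle : (n : ℝ) ≤ ((n + j : ℕ) : ℝ) := by push_cast; linarith [Nat.cast_nonneg (α := ℝ) j]
      nlinarith
    have hb3 : 2 / Real.sqrt ((n + j : ℕ) : ℝ) ≤ 2 / Real.sqrt n := by
      have h1 : (0:ℝ) < Real.sqrt n := Real.sqrt_pos.mpr (by positivity)
      have h2 : Real.sqrt (n : ℝ) ≤ Real.sqrt ((n + j : ℕ) : ℝ) :=
        Real.sqrt_le_sqrt (by push_cast; linarith [Nat.cast_nonneg (α := ℝ) j])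
      exact div_le_div_of_nonneg_left (by norm_num) h1 h2
    have hb4 : D0 ≤ dist (cesaro' m n) τ + δ / 4 := by
      calc D0 = dist (cesaro' m n) τ' := hD0
        _ ≤ dist (cesaro' m n) τ + dist τ τ' := dist_triangle _ _ _
        _ ≤ dist (cesaro' m n) τ + δ / 4 := by rw [dist_comm τ τ']; linarith
    calc dist (cesaro' m' i) τ ≤ dist (cesaro' m' i) τ' + dist τ' τ := dist_triangle _ _ _
      _ ≤ (C / ((n + j : ℕ) : ℝ) + 2 / Real.sqrt ((n + j : ℕ) : ℝ)) + δ / 4 :=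
          add_le_add hb1 hττ'
      _ ≤ (D0 + 2 / Real.sqrt n) + δ / 4 := add_le_add (add_le_add hb2 hb3) (le_refl _)
      _ ≤ dist (cesaro' m n) τ + δ + 2 / Real.sqrt n := by linarith
end Stage

section Main

variable {Ω : Type*} [Fintype Ω]

local notation "E" => EuclideanSpace ℝ Ω

lemma exists_stage_between (nseq : ℕ → ℕ) (hge : ∀ j, j ≤ nseq j) (J0 i : ℕ)
    (hi : nseq J0 ≤ i) : ∃ j, J0 ≤ j ∧ nseq j ≤ i ∧ i < nseq (j + 1) := by
  classical
  refine ⟨Nat.findGreatest (fun k => nseq k ≤ i) i, ?_, ?_, ?_⟩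
  · exact Nat.le_findGreatest (le_trans (hge J0) hi) hi
  · exact Nat.findGreatest_spec (P := fun k => nseq k ≤ i) (le_trans (hge J0) hi) hi
  · by_contra h
    push_neg at h
    exact Nat.findGreatest_is_greatest (lt_add_one _) (le_trans (hge _) h) h

set_option maxHeartbeats 2000000 in
lemma main_construct {M N : Set E} (hMsub : M ⊆ probVec Ω) (hNne : N.Nonempty)
    (hNcl : IsClosed N) (hNconn : IsPreconnected N)
    (hNsub : N ⊆ closure (convexHull ℝ M)) (m : ℕ → E) (hm : ∀ i, m i ∈ M) (n : ℕ) :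
    ∃ m' : ℕ → E, (∀ i, m' i ∈ M) ∧ (∀ i < n, m' i = m i) ∧
      {c | MapClusterPt c atTop (cesaro' m')} = N := by
  classical
  have hhull : closure (convexHull ℝ M) ⊆ probVec Ω :=
    closure_minimal (convexHull_min hMsub probVec_convex) probVec_isClosed
  have hNpv : N ⊆ probVec Ω := subset_trans hNsub hhull
  have hNbd : Bornology.IsBounded N := by
    apply (Metric.isBounded_closedBall (x := (0 : E)) (r := 1)).subset
    intro p hp
    rw [Metric.mem_closedBall, dist_zero_right]
    exact probVec_norm_le (hNpv hp)
  have htb : TotallyBounded N :=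
    (Metric.isCompact_of_isClosed_isBounded hNcl hNbd).totallyBounded
  obtain ⟨t, htmem, hsteps, hdense⟩ := exists_targets hNne hNconn htb
  set δ : ℕ → ℝ := fun j => 1 / (j + 1) with hδdef
  have hδpos : ∀ j, 0 < δ j := fun j => by rw [hδdef]; positivity
  have hδanti : ∀ {j j'}, j ≤ j' → δ j' ≤ δ j := by
    intro j j' h
    rw [hδdef]
    apply div_le_div_of_nonneg_left (by norm_num) (by positivity)
    have : (j : ℝ) ≤ j' := by exact_mod_cast h
    linarith
  have hδsmall : ∀ ε > 0, ∃ K : ℕ, δ K ≤ ε := by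
    intro ε hε
    obtain ⟨K, hK⟩ := exists_nat_gt (1 / ε)
    refine ⟨K, ?_⟩
    rw [hδdef, div_le_iff₀ (by positivity), ← div_le_iff₀' hε]
    · linarith
  have hτmem : ∀ j, t j ∈ closure (convexHull ℝ M) := fun j => hNsub (htmem j)
  -- invariant and step relation for the recursive construction
  set P : ℕ → ℕ × (ℕ → E) → Prop := fun j a =>
    (∀ i, a.2 i ∈ M) ∧ (∀ i < n, a.2 i = m i) ∧ n < a.1 ∧ 4 * (j + 1) ^ 2 ≤ a.1 ∧
      dist (cesaro' a.2 a.1) (t j) ≤ δ j with hP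
  set R : ℕ → ℕ × (ℕ → E) → ℕ × (ℕ → E) → Prop := fun j a b =>
    a.1 < b.1 ∧ (∀ i < a.1, b.2 i = a.2 i) ∧
      ∀ i, a.1 ≤ i → i ≤ b.1 →
        dist (cesaro' b.2 i) (t (j + 1)) ≤ δ j + dist (t j) (t (j + 1)) + δ (j + 1) + δ j
    with hR
  have hsqrtbound : ∀ (j nj : ℕ), 4 * (j + 1) ^ 2 ≤ nj → 2 / Real.sqrt nj ≤ δ j := by
    intro j nj hnj
    have hnj' : (4 * (j + 1) ^ 2 : ℝ) ≤ (nj : ℝ) := by exact_mod_cast hnj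
    have hj1 : (0 : ℝ) < (j : ℝ) + 1 := by positivity
    have hsq : Real.sqrt ((4 * (j + 1) ^ 2 : ℕ) : ℝ) = 2 * ((j : ℝ) + 1) := by
      have : ((4 * (j + 1) ^ 2 : ℕ) : ℝ) = (2 * ((j : ℝ) + 1)) ^ 2 := by push_cast; ring
      rw [this, Real.sqrt_sq (by positivity)]
    have hs : 2 * ((j : ℝ) + 1) ≤ Real.sqrt nj := by
      rw [← hsq]
      exact Real.sqrt_le_sqrt (by exact_mod_cast hnj)
    have hspos : (0 : ℝ) < Real.sqrt nj := lt_of_lt_of_le (by positivity) hs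
    rw [hδdef]
    rw [div_le_div_iff₀ hspos hj1]
    nlinarith
  have h0 : ∃ a, P 0 a := by
    obtain ⟨m0, n0, h1, h2, h3, h4, h5, _⟩ :=
      stage_lemma hMsub (hτmem 0) m hm (n := n + 1) (by omega) (hδpos 0) (4 * (0 + 1) ^ 2)
    exact ⟨(n0, m0), h1, fun i hi => h2 i (by omega), by show n < n0; omega,
      by show 4 * (0 + 1) ^ 2 ≤ n0; omega, h5⟩
  have hstep : ∀ j a, P j a → ∃ b, P (j + 1) b ∧ R j a b := by
    intro j a ha
    obtain ⟨ha1, ha2, ha3, ha4, ha5⟩ := ha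
    obtain ⟨m1, n1, h1, h2, h3, h4, h5, h6⟩ :=
      stage_lemma hMsub (hτmem (j + 1)) a.2 ha1 (n := a.1) (by omega) (hδpos (j + 1))
        (4 * (j + 1 + 1) ^ 2)
    have hpre : ∀ i < n, m1 i = m i := fun i hi => by
      rw [h2 i (by omega)]; exact ha2 i hi
    refine ⟨(n1, m1), ⟨h1, hpre, by show n < n1; omega,
      by show 4 * (j + 1 + 1) ^ 2 ≤ n1; omega, h5⟩, by show a.1 < n1; omega, h2, ?_⟩
    intro i hi1 hi2
    have hb := h6 i hi1 hi2
    have htri : dist (cesaro' a.2 a.1) (t (j + 1))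
        ≤ δ j + dist (t j) (t (j + 1)) := by
      calc dist (cesaro' a.2 a.1) (t (j + 1))
          ≤ dist (cesaro' a.2 a.1) (t j) + dist (t j) (t (j + 1)) := dist_triangle _ _ _
        _ ≤ δ j + dist (t j) (t (j + 1)) := by linarith
    have hsb := hsqrtbound j a.1 ha4
    calc dist (cesaro' m1 i) (t (j + 1))
        ≤ dist (cesaro' a.2 a.1) (t (j + 1)) + δ (j + 1) + 2 / Real.sqrt a.1 := hb
      _ ≤ δ j + dist (t j) (t (j + 1)) + δ (j + 1) + δ j := by linarith
  obtain ⟨G, hGP, hGR⟩ := depRec P R h0 hstep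
  set nseq : ℕ → ℕ := fun j => (G j).1 with hnseq
  set mseq : ℕ → ℕ → E := fun j => (G j).2 with hmseq
  have hmono : ∀ j, nseq j < nseq (j + 1) := fun j => (hGR j).1
  have hGRagree : ∀ j, ∀ i < nseq j, mseq (j + 1) i = mseq j i := fun j => (hGR j).2.1
  have hGRroute : ∀ j i, nseq j ≤ i → i ≤ nseq (j + 1) →
      dist (cesaro' (mseq (j + 1)) i) (t (j + 1))
        ≤ δ j + dist (t j) (t (j + 1)) + δ (j + 1) + δ j := fun j => (hGR j).2.2
  have hGPM : ∀ j i, mseq j i ∈ M := fun j => (hGP j).1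
  have hGPpre : ∀ j, ∀ i < n, mseq j i = m i := fun j => (hGP j).2.1
  have hGPn : ∀ j, n < nseq j := fun j => (hGP j).2.2.1
  have hGPd : ∀ j, dist (cesaro' (mseq j) (nseq j)) (t j) ≤ δ j := fun j => (hGP j).2.2.2.2
  have hnseq_ge : ∀ j, j + 1 ≤ nseq j := by
    intro j
    induction j with
    | zero => have := hGPn 0; omega
    | succ j ih => have := hmono j; omega
  have hmono' : ∀ {j j'}, j ≤ j' → nseq j ≤ nseq j' := by
    intro j j' h
    induction j', h using Nat.le_induction with
    | base => exact le_rfl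
    | succ j' hjj' ih => exact le_trans ih (le_of_lt (hmono j'))
  have hagree : ∀ j j', j ≤ j' → ∀ i < nseq j, mseq j' i = mseq j i := by
    intro j j' h
    induction j', h using Nat.le_induction with
    | base => intro i _; rfl
    | succ j' hjj' ih =>
      intro i hi
      have h1 : i < nseq j' := lt_of_lt_of_le hi (hmono' hjj')
      rw [hGRagree j' i h1]
      exact ih i hi
  set mf : ℕ → E := fun i => mseq (i + 1) i with hmf
  have hmfagree : ∀ j, ∀ i < nseq j, mf i = mseq j i := by
    intro j i hi
    rcases Nat.le_total j (i + 1) with h | h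
    · exact hagree j (i + 1) h i hi
    · have h1 : i < nseq (i + 1) := by have := hnseq_ge (i + 1); omega
      exact (hagree (i + 1) j h i h1).symm
  have hcesagree : ∀ j k, k ≤ nseq j → cesaro' mf k = cesaro' (mseq j) k := by
    intro j k hk
    rw [cesaro', cesaro']
    congr 1
    refine Finset.sum_congr rfl fun i hi => ?_
    exact hmfagree j i (by have := Finset.mem_range.mp hi; omega)
  have hmfM : ∀ i, mf i ∈ M := fun i => hGPM (i + 1) i
  have hmfpre : ∀ i < n, mf i = m i := fun i hi => hGPpre (i + 1) i hi
  -- the two key approximation properties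
  have hc1 : ∀ ε > 0, ∃ I, ∀ i ≥ I, ∃ y ∈ N, dist (cesaro' mf i) y ≤ ε := by
    intro ε hε
    obtain ⟨K1, hK1⟩ := hδsmall (ε / 4) (by positivity)
    obtain ⟨K2, hK2⟩ := hsteps (ε / 4) (by positivity)
    set J0 := max K1 K2 with hJ0
    refine ⟨nseq J0, fun i hi => ?_⟩
    obtain ⟨j, hjge, hjle, hjlt⟩ := exists_stage_between nseq
      (fun j => by have := hnseq_ge j; omega) J0 i hi
    have hR' := hGRroute j i hjle (le_of_lt hjlt)
    rw [← hcesagree (j + 1) i (le_of_lt hjlt)] at hR'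
    refine ⟨t (j + 1), htmem (j + 1), le_trans hR' ?_⟩
    have e1 : δ j ≤ ε / 4 := le_trans (hδanti (le_trans (le_max_left _ _) hjge)) hK1
    have e2 : δ (j + 1) ≤ ε / 4 :=
      le_trans (hδanti (by omega : K1 ≤ j + 1)) hK1
    have e3 : dist (t j) (t (j + 1)) ≤ ε / 4 := hK2 j (le_trans (le_max_right _ _) hjge)
    linarith
  have hc2 : ∀ y ∈ N, ∀ ε > 0, ∀ I : ℕ, ∃ i ≥ I, dist (cesaro' mf i) y ≤ ε := by
    intro y hy ε hε I
    obtain ⟨K1, hK1⟩ := hδsmall (ε / 2) (by positivity)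
    obtain ⟨j, hjge, hjd⟩ := hdense y hy (ε / 2) (by positivity) (max I K1)
    refine ⟨nseq j, le_trans (le_trans (le_max_left _ _) (le_trans hjge (by have := hnseq_ge j; omega))) (le_refl _), ?_⟩
    have hcp := hGPd j
    rw [← hcesagree j (nseq j) (le_refl _)] at hcp
    have e1 : δ j ≤ ε / 2 := le_trans (hδanti (le_trans (le_max_right _ _) hjge)) hK1
    calc dist (cesaro' mf (nseq j)) y ≤ dist (cesaro' mf (nseq j)) (t j) + dist (t j) y :=
          dist_triangle _ _ _
      _ ≤ ε / 2 + ε / 2 := add_le_add (le_trans hcp e1) hjd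
      _ = ε := by ring
  refine ⟨mf, hmfM, hmfpre, ?_⟩
  ext c
  simp only [Set.mem_setOf_eq]
  constructor
  · intro hcp
    rw [← hNcl.closure_eq]
    rw [Metric.mem_closure_iff]
    intro ε hε
    obtain ⟨I, hI⟩ := hc1 (ε / 4) (by positivity)
    have hfreq := mapClusterPt_iff_frequently.mp hcp (Metric.ball c (ε / 4))
      (Metric.ball_mem_nhds c (by positivity))
    obtain ⟨i, hiI, hib⟩ := frequently_atTop.mp hfreq I
    obtain ⟨y, hyN, hyd⟩ := hI i hiI
    refine ⟨y, hyN, ?_⟩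
    rw [Metric.mem_ball] at hib
    calc dist c y ≤ dist c (cesaro' mf i) + dist (cesaro' mf i) y := dist_triangle _ _ _
      _ ≤ ε / 4 + ε / 4 := add_le_add (by rw [dist_comm]; linarith) hyd
      _ < ε := by linarith
  · intro hcN
    rw [mapClusterPt_iff_frequently]
    intro s hs
    obtain ⟨ε, hε, hball⟩ := Metric.mem_nhds_iff.mp hs
    rw [frequently_atTop]
    intro I
    obtain ⟨i, hiI, hid⟩ := hc2 c hcN (ε / 2) (by positivity) I
    refine ⟨i, hiI, hball ?_⟩
    rw [Metric.mem_ball]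
    linarith

end Main

section Measure

open MeasureTheory

lemma rect_measure {Ω : Type*} [Fintype Ω] [DecidableEq Ω] [MeasurableSpace Ω]
    [MeasurableSingletonClass Ω] (μ : Measure (ℕ → Ω)) (m : ℕ → EuclideanSpace ℝ Ω)
    (hnn : ∀ i x, 0 ≤ m i x)
    (hμ : ∀ (k : ℕ) (x : Fin k → Ω), μ {ω | ∀ i : Fin k, ω (i : ℕ) = x i}
      = ∏ i : Fin k, ENNReal.ofReal (m i.val (x i)))
    (n : ℕ) (A : Fin n → Finset Ω) :
    μ {ω : ℕ → Ω | ∀ i : Fin n, ω (i : ℕ) ∈ A i}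
      = ∏ i : Fin n, ENNReal.ofReal (∑ x ∈ A i, m i.val x) := by
  classical
  have hset : {ω : ℕ → Ω | ∀ i : Fin n, ω (i : ℕ) ∈ A i}
      = ⋃ x ∈ Fintype.piFinset A, {ω : ℕ → Ω | ∀ i : Fin n, ω (i : ℕ) = x i} := by
    ext ω
    simp only [Set.mem_setOf_eq, Set.mem_iUnion, Fintype.mem_piFinset, exists_prop]
    constructor
    · intro h
      exact ⟨fun i => ω (i : ℕ), fun i => h i, fun i => rfl⟩
    · rintro ⟨x, hx, he⟩ i
      rw [he i]
      exact hx i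
  rw [hset, measure_biUnion_finset]
  · rw [Finset.prod_congr rfl (fun (i : Fin n) _ =>
      ENNReal.ofReal_sum_of_nonneg (fun x _ => hnn i.val x)), Finset.prod_univ_sum]
    exact Finset.sum_congr rfl fun x _ => hμ n x
  · -- pairwise disjoint
    intro x _ y _ hxy
    simp only [Function.onFun]
    rw [Set.disjoint_left]
    intro ω hωx hωy
    apply hxy
    funext i
    rw [← hωx i, ← hωy i]
  · -- measurable
    intro x _
    have : {ω : ℕ → Ω | ∀ i : Fin n, ω (i : ℕ) = x i}
        = ⋂ i : Fin n, (fun ω : ℕ → Ω => ω (i : ℕ)) ⁻¹' {x i} := by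
      ext ω; simp
    rw [this]
    exact MeasurableSet.iInter fun i =>
      (measurable_pi_apply (i : ℕ)) (measurableSet_singleton (x i))

end Measure


/-- On rectangles (finite-dimensional cylinder events), the lower
probabilities of the models `P̲_{M→N}` and `P̲_M` agree, and both equal the infimum of the
corresponding finite products over choices of measures from `M`. -/
theorem stmt11 {Ω : Type*} [Fintype Ω] [DecidableEq Ω] [MeasurableSpace Ω]
    [MeasurableSingletonClass Ω] (hcard : 1 < Fintype.card Ω)
    (M : Set (EuclideanSpace ℝ Ω)) (hM : M.Nonempty) (hMsub : M ⊆ probVec Ω)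
    (N : Set (EuclideanSpace ℝ Ω)) (hNne : N.Nonempty) (hNcl : IsClosed N)
    (hNconn : IsConnected N) (hNsub : N ⊆ closure (convexHull ℝ M))
    (IT : (ℕ → EuclideanSpace ℝ Ω) → Measure (ℕ → Ω))
    (hIT : ∀ m : ℕ → EuclideanSpace ℝ Ω, (∀ i, m i ∈ M) → IsIT m (IT m))
    (n : ℕ) (A : Fin n → Finset Ω) :
    (⨅ m ∈ {m : ℕ → EuclideanSpace ℝ Ω | (∀ i, m i ∈ M) ∧ clusterPts (cesaro m) = N},
        IT m {ω : ℕ → Ω | ∀ i : Fin n, ω (i : ℕ) ∈ A i}) =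
      (⨅ m ∈ {m : ℕ → EuclideanSpace ℝ Ω | ∀ i, m i ∈ M},
        IT m {ω : ℕ → Ω | ∀ i : Fin n, ω (i : ℕ) ∈ A i}) ∧
    (⨅ m ∈ {m : ℕ → EuclideanSpace ℝ Ω | ∀ i, m i ∈ M},
        IT m {ω : ℕ → Ω | ∀ i : Fin n, ω (i : ℕ) ∈ A i}) =
      ⨅ (m : Fin n → EuclideanSpace ℝ Ω) (_ : ∀ i, m i ∈ M),
        ∏ i : Fin n, ENNReal.ofReal (∑ x ∈ A i, m i x) := by
  classical
  have hval : ∀ (mm : ℕ → EuclideanSpace ℝ Ω), (∀ i, mm i ∈ M) →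
      IT mm {ω : ℕ → Ω | ∀ i : Fin n, ω (i : ℕ) ∈ A i}
        = ∏ i : Fin n, ENNReal.ofReal (∑ x ∈ A i, mm (i : ℕ) x) := by
    intro mm hmm
    exact rect_measure (IT mm) mm (fun i x => (hMsub (hmm i)).1 x) (hIT mm hmm) n A
  constructor
  · apply le_antisymm
    · apply le_iInf₂
      intro mm hmm
      obtain ⟨m', hm'M, hm'pre, hm'cl⟩ := main_construct hMsub hNne hNcl
        hNconn.isPreconnected hNsub mm hmm n
      have hm'mem : m' ∈ {m : ℕ → EuclideanSpace ℝ Ω |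
          (∀ i, m i ∈ M) ∧ clusterPts (cesaro m) = N} := ⟨hm'M, hm'cl⟩
      refine le_trans (iInf₂_le m' hm'mem) (le_of_eq ?_)
      rw [hval m' hm'M, hval mm hmm]
      refine Finset.prod_congr rfl fun i _ => ?_
      rw [hm'pre (i : ℕ) i.isLt]
    · exact le_iInf₂ fun mm hmm => iInf₂_le mm hmm.1
  · apply le_antisymm
    · apply le_iInf₂
      intro mt hmt
      set mm : ℕ → EuclideanSpace ℝ Ω :=
        fun i => if h : i < n then mt ⟨i, h⟩ else hM.choose with hmmdef
      have hmmM : ∀ i, mm i ∈ M := by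
        intro i
        by_cases h : i < n
        · simp only [hmmdef, dif_pos h]; exact hmt _
        · simp only [hmmdef, dif_neg h]; exact hM.choose_spec
      refine le_trans (iInf₂_le mm hmmM) (le_of_eq ?_)
      rw [hval mm hmmM]
      refine Finset.prod_congr rfl fun i _ => ?_
      have : mm (i : ℕ) = mt i := by
        simp only [hmmdef, dif_pos i.isLt, Fin.eta]
      rw [this]
    · apply le_iInf₂
      intro mm hmm
      refine le_trans (iInf₂_le (fun i : Fin n => mm (i : ℕ)) (fun i : Fin n => hmm (i : ℕ)))
        (le_of_eq ?_)
      exact (hval mm hmm).symm
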